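/- With P a product of d nonzero linear forms in e variables with nonnegative coefficients and ŝ(P) its index of integrability on (0,1]^e, the integral ∫_{(0,1]^e} P(x)^{-ŝ(P)} dx diverges (is +∞). -/

import Mathlib

open MeasureTheory Real

section Aux

lemma map_affine_diag (e : ℕ) (σ v : Fin e → ℝ) (hσ : ∀ j, 0 < σ j) :
    Measure.map (fun (x : Fin e → ℝ) j => σ j * x j + v j) (volume : Measure (Fin e → ℝ))
      = ENNReal.ofReal (∏ j, σ j)⁻¹ • volume := by
  classical
  have hdet : LinearMap.det (Matrix.toLin' (Matrix.diagonal σ)) = ∏ j, σ j := by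
    rw [LinearMap.det_toLin', Matrix.det_diagonal]
  have hprod : (0:ℝ) < ∏ j, σ j := Finset.prod_pos fun j _ => hσ j
  have hT : (fun (x : Fin e → ℝ) j => σ j * x j + v j)
      = (fun y => y + v) ∘ (Matrix.toLin' (Matrix.diagonal σ)) := by
    funext x
    funext j
    simp [Matrix.toLin'_apply, Matrix.mulVec_diagonal]
  rw [hT, ← Measure.map_map (by measurability) (Matrix.toLin' (Matrix.diagonal σ)).continuous_of_finiteDimensional.measurable,
    Real.map_linearMap_volume_pi_eq_smul_volume_pi (by rw [hdet]; exact hprod.ne'),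
    Measure.map_smul]
  rw [show (fun y : Fin e → ℝ => y + v) = fun y => y + v from rfl]
  rw [map_add_right_eq_self (volume : Measure (Fin e → ℝ)) v]
  rw [hdet, abs_of_pos (by positivity)]

lemma setLIntegral_comp_affine (e : ℕ) (σ v : Fin e → ℝ) (hσ : ∀ j, 0 < σ j)
    {g : (Fin e → ℝ) → ENNReal} (hg : Measurable g) {S : Set (Fin e → ℝ)} (hS : MeasurableSet S) :
    ∫⁻ y in S, g y ∂(volume : Measure (Fin e → ℝ))
      = ENNReal.ofReal (∏ j, σ j) *
        ∫⁻ x in (fun (x : Fin e → ℝ) j => σ j * x j + v j) ⁻¹' S,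
          g (fun j => σ j * x j + v j) ∂volume := by
  have hprod : (0:ℝ) < ∏ j, σ j := Finset.prod_pos fun j _ => hσ j
  have hmT : Measurable (fun (x : Fin e → ℝ) j => σ j * x j + v j) := by
    apply measurable_pi_lambda
    intro j
    exact ((measurable_pi_apply j).const_mul _).add_const _
  have h1 := setLIntegral_map (μ := (volume : Measure (Fin e → ℝ))) hS hg hmT
  rw [map_affine_diag e σ v hσ] at h1
  rw [Measure.restrict_smul, lintegral_smul_measure] at h1
  rw [← h1, smul_eq_mul, ← mul_assoc, ← ENNReal.ofReal_mul hprod.le, mul_inv_cancel₀ hprod.ne',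
    ENNReal.ofReal_one, one_mul]


end Aux
open scoped Classical


section Aux2

variable {d e : ℕ} (c : Fin d → Fin e → ℝ)

/-- the linear form -/
def lform (i : Fin d) (x : Fin e → ℝ) : ℝ := ∑ j, c i j * x j

/-- the open-closed unit box -/
def ubox (e : ℕ) : Set (Fin e → ℝ) := {x | ∀ j, x j ∈ Set.Ioc (0:ℝ) 1}

lemma ubox_eq : ubox e = Set.pi Set.univ (fun _ : Fin e => Set.Ioc (0:ℝ) 1) := by
  ext x; simp [ubox, Set.mem_pi]

lemma measurableSet_ubox : MeasurableSet (ubox e) := by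
  rw [ubox_eq]; exact MeasurableSet.univ_pi fun _ => measurableSet_Ioc

lemma volume_ubox : (volume : Measure (Fin e → ℝ)) (ubox e) = 1 := by
  rw [ubox_eq, volume_pi_pi]
  simp

/-- the integrand -/
noncomputable def fint (I : Finset (Fin d)) (s : ℝ) (x : Fin e → ℝ) : ENNReal :=
  ENNReal.ofReal ((∏ i ∈ I, lform c i x) ^ (-s))

/-- the local integral -/
noncomputable def Fand (I : Finset (Fin d)) (s : ℝ) : ENNReal :=
  ∫⁻ x in ubox e, fint c I s x

lemma measurable_fint (I : Finset (Fin d)) (s : ℝ) : Measurable (fint c I s) := by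
  unfold fint lform
  fun_prop

/-- support of a set of forms -/
noncomputable def fsupp (I : Finset (Fin d)) : Finset (Fin e) :=
  Finset.univ.filter fun j => ∃ i ∈ I, c i j ≠ 0

lemma mem_fsupp {I : Finset (Fin d)} {j : Fin e} :
    j ∈ fsupp c I ↔ ∃ i ∈ I, c i j ≠ 0 := by simp [fsupp]

lemma lform_nonneg (hc : ∀ i j, 0 ≤ c i j) {x : Fin e → ℝ} (hx : ∀ j, 0 ≤ x j) (i : Fin d) : 0 ≤ lform c i x :=
  Finset.sum_nonneg fun j _ => mul_nonneg (hc i j) (hx j)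

lemma lform_pos (hc : ∀ i j, 0 ≤ c i j) (hrow : ∀ i, ∃ j, c i j ≠ 0) {x : Fin e → ℝ} (hx : ∀ j, 0 < x j) (i : Fin d) : 0 < lform c i x := by
  obtain ⟨j, hj⟩ := hrow i
  have h1 : 0 < c i j * x j := mul_pos ((hc i j).lt_of_ne' hj) (hx j)
  calc (0:ℝ) < c i j * x j := h1
    _ ≤ _ := Finset.single_le_sum (fun k _ => mul_nonneg (hc i k) (hx k).le) (Finset.mem_univ j)

lemma lform_le (hc : ∀ i j, 0 ≤ c i j) {x : Fin e → ℝ} (hx : ∀ j, x j ∈ Set.Ioc (0:ℝ) 1) (i : Fin d) :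
    lform c i x ≤ ∑ j, c i j :=
  Finset.sum_le_sum fun j _ => by
    nlinarith [(hx j).2, hc i j, (hx j).1]

/-- an upper bound constant for the product of forms over `I`, at least 1 -/
noncomputable def CB (I : Finset (Fin d)) : ℝ := ∏ i ∈ I, (1 + ∑ j, c i j)

lemma one_le_CB (hc : ∀ i j, 0 ≤ c i j) (I : Finset (Fin d)) : 1 ≤ CB c I := by
  unfold CB
  have : ∀ i ∈ I, (1:ℝ) ≤ 1 + ∑ j, c i j := by
    intro i _
    have : (0:ℝ) ≤ ∑ j, c i j := Finset.sum_nonneg fun j _ => hc i j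
    linarith
  have h := Finset.prod_le_prod (s := I) (f := fun _ => (1:ℝ))
    (g := fun i => 1 + ∑ j, c i j) (fun i _ => zero_le_one) this
  simpa using h

lemma CB_pos (hc : ∀ i j, 0 ≤ c i j) (I : Finset (Fin d)) : 0 < CB c I := lt_of_lt_of_le one_pos (one_le_CB c hc I)

lemma prod_lform_pos (hc : ∀ i j, 0 ≤ c i j) (hrow : ∀ i, ∃ j, c i j ≠ 0) {x : Fin e → ℝ} (hx : x ∈ ubox e) (I : Finset (Fin d)) :
    0 < ∏ i ∈ I, lform c i x :=
  Finset.prod_pos fun i _ => lform_pos c hc hrow (fun j => (hx j).1) i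

lemma prod_lform_le_CB (hc : ∀ i j, 0 ≤ c i j) (hrow : ∀ i, ∃ j, c i j ≠ 0) {x : Fin e → ℝ} (hx : x ∈ ubox e) (I : Finset (Fin d)) :
    ∏ i ∈ I, lform c i x ≤ CB c I := by
  apply Finset.prod_le_prod
  · exact fun i _ => (lform_pos c hc hrow (fun j => (hx j).1) i).le
  · intro i _
    have := lform_le c hc (fun j => hx j) i
    linarith

end Aux2


section Aux3
variable {d e : ℕ} (c : Fin d → Fin e → ℝ)

def Jbox (J : Finset (Fin e)) (r : ℝ) : Set (Fin e → ℝ) :=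
  {x | ∀ j, x j ∈ Set.Ioc (0:ℝ) (if j ∈ J then r else 1)}

lemma measurableSet_Jbox (J : Finset (Fin e)) (r : ℝ) : MeasurableSet (Jbox J r) := by
  have : Jbox J r = Set.pi Set.univ (fun j => Set.Ioc (0:ℝ) (if j ∈ J then r else 1)) := by
    ext x; simp [Jbox, Set.mem_pi]
  rw [this]
  exact MeasurableSet.univ_pi fun _ => measurableSet_Ioc

lemma Jbox_one (J : Finset (Fin e)) : Jbox J 1 = ubox e := by
  ext x
  simp only [Jbox, ubox, Set.mem_setOf_eq]
  constructor <;> intro h j <;> have := h j <;> split_ifs at * <;> simpa using this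

lemma Jbox_mono (J : Finset (Fin e)) {r r' : ℝ} (h : r ≤ r') : Jbox J r ⊆ Jbox J r' := by
  intro x hx j
  have := hx j
  constructor
  · exact this.1
  · refine le_trans this.2 ?_
    split_ifs <;> simp [h, le_refl]

def Jring (J : Finset (Fin e)) (n : ℕ) : Set (Fin e → ℝ) :=
  Jbox J (((2:ℝ)⁻¹) ^ n) \ Jbox J (((2:ℝ)⁻¹) ^ (n + 1))

lemma measurableSet_Jring (J : Finset (Fin e)) (n : ℕ) : MeasurableSet (Jring J n) :=
  (measurableSet_Jbox J _).diff (measurableSet_Jbox J _)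

lemma Jring_subset_ubox (J : Finset (Fin e)) (n : ℕ) : Jring J n ⊆ ubox e := by
  refine Set.diff_subset.trans ?_
  rw [← Jbox_one J]
  exact Jbox_mono J (by
    apply pow_le_one₀ <;> norm_num)

lemma Jring_disjoint (J : Finset (Fin e)) : Pairwise (Function.onFun Disjoint (Jring J)) := by
  have key : ∀ m n : ℕ, m < n → Disjoint (Jring J m) (Jring J n) := by
    intro m n hmn
    rw [Set.disjoint_left]
    intro x hxm hxn
    have h1 : x ∈ Jbox J ((2:ℝ)⁻¹ ^ (m + 1)) := by
      refine Jbox_mono J ?_ hxn.1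
      apply pow_le_pow_of_le_one (by norm_num) (by norm_num) hmn
    exact hxm.2 h1
  intro m n hmn
  rcases lt_or_gt_of_ne hmn with h | h
  · exact key m n h
  · exact (key n m h).symm

lemma iUnion_Jring (J : Finset (Fin e)) (hJ : J.Nonempty) : (⋃ n, Jring J n) = ubox e := by
  apply Set.Subset.antisymm
  · exact Set.iUnion_subset fun n => Jring_subset_ubox J n
  · intro x hx
    set M := J.sup' hJ x with hM
    have hMle : ∀ j ∈ J, x j ≤ M := fun j hj => Finset.le_sup' x hj
    obtain ⟨j₀, hj₀, hj₀M⟩ := Finset.exists_mem_eq_sup' hJ x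
    have hM0 : 0 < M := by rw [hM, hj₀M]; exact (hx j₀).1
    have hM1 : M ≤ 1 := by rw [hM, hj₀M]; exact (hx j₀).2
    have hex : ∃ n : ℕ, (2:ℝ)⁻¹ ^ (n + 1) < M := by
      obtain ⟨n, hn⟩ := exists_pow_lt_of_lt_one hM0 (by norm_num : (2:ℝ)⁻¹ < 1)
      exact ⟨n, lt_of_le_of_lt (pow_le_pow_of_le_one (by norm_num) (by norm_num) (by omega)) hn⟩
    set n₀ := Nat.find hex with hn₀
    have hlt : (2:ℝ)⁻¹ ^ (n₀ + 1) < M := Nat.find_spec hex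
    have hle : M ≤ (2:ℝ)⁻¹ ^ n₀ := by
      rcases Nat.eq_zero_or_pos n₀ with h0 | h0
      · rw [h0]; simpa using hM1
      · have := Nat.find_min hex (m := n₀ - 1) (by omega)
        push_neg at this
        calc M ≤ (2:ℝ)⁻¹ ^ (n₀ - 1 + 1) := this
          _ = (2:ℝ)⁻¹ ^ n₀ := by congr 1; omega
    refine Set.mem_iUnion.2 ⟨n₀, ?_, ?_⟩
    · intro j
      refine ⟨(hx j).1, ?_⟩
      split_ifs with h
      · exact le_trans (hMle j h) hle
      · exact (hx j).2
    · intro hmem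
      have := (hmem j₀).2
      rw [if_pos hj₀] at this
      rw [hM, hj₀M] at hlt
      linarith
end Aux3
section Aux4
variable {d e : ℕ} (c : Fin d → Fin e → ℝ)

lemma dbl_preimage_Jbox (J : Finset (Fin e)) (r : ℝ) :
    (fun (x : Fin e → ℝ) j => (if j ∈ J then (2:ℝ) else 1) * x j) ⁻¹' Jbox J r
      = Jbox J (r / 2) := by
  ext x
  simp only [Set.mem_preimage, Jbox, Set.mem_setOf_eq]
  refine forall_congr' fun j => ?_
  split_ifs with hj
  · simp only [Set.mem_Ioc]
    constructor <;> rintro ⟨h1, h2⟩ <;> constructor <;> linarith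
  · simp

lemma dbl_preimage_Jring (J : Finset (Fin e)) (n : ℕ) :
    (fun (x : Fin e → ℝ) j => (if j ∈ J then (2:ℝ) else 1) * x j) ⁻¹' Jring J n
      = Jring J (n + 1) := by
  unfold Jring
  rw [Set.preimage_diff, dbl_preimage_Jbox, dbl_preimage_Jbox]
  have h1 : (2:ℝ)⁻¹ ^ n / 2 = (2:ℝ)⁻¹ ^ (n + 1) := by
    rw [pow_succ]; ring
  have h2 : (2:ℝ)⁻¹ ^ (n + 1) / 2 = (2:ℝ)⁻¹ ^ (n + 1 + 1) := by
    rw [pow_succ _ (n+1)]; ring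
  rw [h1, h2]

lemma lform_dbl {I : Finset (Fin d)} {i : Fin d} (hi : i ∈ I) (x : Fin e → ℝ) :
    lform c i (fun j => (if j ∈ fsupp c I then (2:ℝ) else 1) * x j) = 2 * lform c i x := by
  unfold lform
  rw [Finset.mul_sum]
  refine Finset.sum_congr rfl fun j _ => ?_
  by_cases hj : j ∈ fsupp c I
  · simp only [if_pos hj]; ring
  · have hcij : c i j = 0 := by
      by_contra h
      exact hj ((mem_fsupp c).2 ⟨i, hi, h⟩)
    simp only [if_neg hj, hcij]; ring

lemma fint_dbl (hc : ∀ i j, 0 ≤ c i j) (hrow : ∀ i, ∃ j, c i j ≠ 0)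
    (I : Finset (Fin d)) (s : ℝ) {x : Fin e → ℝ} (hx : x ∈ ubox e) :
    fint c I s (fun j => (if j ∈ fsupp c I then (2:ℝ) else 1) * x j)
      = ENNReal.ofReal ((((2:ℝ) ^ (I.card : ℕ)) ^ s)⁻¹) * fint c I s x := by
  unfold fint
  have hp : (0:ℝ) < ∏ i ∈ I, lform c i x := prod_lform_pos c hc hrow hx I
  have h1 : ∏ i ∈ I, lform c i (fun j => (if j ∈ fsupp c I then (2:ℝ) else 1) * x j)
      = 2 ^ I.card * ∏ i ∈ I, lform c i x := by
    rw [Finset.prod_congr rfl (fun i hi => lform_dbl c hi x), Finset.prod_mul_distrib,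
      Finset.prod_const]
  rw [h1, Real.mul_rpow (by positivity) hp.le, ENNReal.ofReal_mul (by positivity)]
  congr 2
  rw [← Real.rpow_neg_one, ← Real.rpow_natCast (2:ℝ) I.card]
  rw [← Real.rpow_mul (by norm_num), ← Real.rpow_mul (by norm_num), ← Real.rpow_mul (by norm_num)]
  ring_nf

lemma ring_step (hc : ∀ i j, 0 ≤ c i j) (hrow : ∀ i, ∃ j, c i j ≠ 0)
    (I : Finset (Fin d)) (s : ℝ) (n : ℕ) :
    ∫⁻ x in Jring (fsupp c I) n, fint c I s x
      = ENNReal.ofReal ((2:ℝ) ^ ((fsupp c I).card : ℕ) * (((2:ℝ) ^ (I.card : ℕ)) ^ s)⁻¹) *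
        ∫⁻ x in Jring (fsupp c I) (n + 1), fint c I s x := by
  set J := fsupp c I with hJdef
  have hσ : ∀ j : Fin e, (0:ℝ) < (if j ∈ J then (2:ℝ) else 1) := fun j => by
    split_ifs <;> norm_num
  have h := setLIntegral_comp_affine e (fun j => if j ∈ J then (2:ℝ) else 1) (fun _ => 0) hσ
    (measurable_fint c I s) (measurableSet_Jring J n)
  simp only [add_zero] at h
  rw [dbl_preimage_Jring] at h
  have hσprod : (∏ j, (if j ∈ J then (2:ℝ) else 1)) = 2 ^ J.card := by
    rw [Finset.prod_ite_mem Finset.univ J (fun _ => (2:ℝ)), Finset.univ_inter, Finset.prod_const]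
  have hcong : ∫⁻ x in Jring J (n+1), fint c I s (fun j => (if j ∈ J then (2:ℝ) else 1) * x j)
      = ∫⁻ x in Jring J (n+1), ENNReal.ofReal ((((2:ℝ) ^ (I.card : ℕ)) ^ s)⁻¹) * fint c I s x := by
    refine setLIntegral_congr_fun (measurableSet_Jring J (n+1)) ?_
    intro x hx
    exact fint_dbl c hc hrow I s (Jring_subset_ubox J (n+1) hx)
  rw [hcong, lintegral_const_mul _ (measurable_fint c I s), hσprod] at h
  rw [h, ENNReal.ofReal_mul (by positivity), mul_assoc]

lemma ring_closed (hc : ∀ i j, 0 ≤ c i j) (hrow : ∀ i, ∃ j, c i j ≠ 0)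
    (I : Finset (Fin d)) (s : ℝ) (n : ℕ) :
    ∫⁻ x in Jring (fsupp c I) n, fint c I s x
      = (ENNReal.ofReal ((2:ℝ) ^ (s * I.card - (fsupp c I).card))) ^ n *
        ∫⁻ x in Jring (fsupp c I) 0, fint c I s x := by
  set lam := ENNReal.ofReal ((2:ℝ) ^ (s * I.card - (fsupp c I).card)) with hlam
  set C := ENNReal.ofReal ((2:ℝ) ^ ((fsupp c I).card : ℕ) * (((2:ℝ) ^ (I.card : ℕ)) ^ s)⁻¹) with hC
  have hCl : lam * C = 1 := by
    rw [hlam, hC, ← ENNReal.ofReal_mul (by positivity)]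
    rw [show ((2:ℝ) ^ (s * I.card - (fsupp c I).card)) *
        ((2:ℝ) ^ ((fsupp c I).card : ℕ) * (((2:ℝ) ^ (I.card : ℕ)) ^ s)⁻¹) = 1 from ?_]
    · exact ENNReal.ofReal_one
    · rw [← Real.rpow_natCast (2:ℝ) (fsupp c I).card, ← Real.rpow_natCast (2:ℝ) I.card,
        ← Real.rpow_mul (by norm_num), ← Real.rpow_neg_one ((2:ℝ) ^ ((I.card : ℝ) * s)),
        ← Real.rpow_mul (by norm_num), ← Real.rpow_add (by norm_num),
        ← Real.rpow_add (by norm_num)]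
      rw [show s * ↑I.card - ↑(fsupp c I).card + (↑(fsupp c I).card + ↑I.card * s * -1) = 0 by ring]
      exact Real.rpow_zero 2
  induction n with
  | zero => simp
  | succ n ih =>
    have hstep := ring_step c hc hrow I s n
    rw [← hC] at hstep
    calc ∫⁻ x in Jring (fsupp c I) (n+1), fint c I s x
        = 1 * ∫⁻ x in Jring (fsupp c I) (n+1), fint c I s x := (one_mul _).symm
      _ = lam * (C * ∫⁻ x in Jring (fsupp c I) (n+1), fint c I s x) := by
          rw [← mul_assoc, hCl]
      _ = lam * ∫⁻ x in Jring (fsupp c I) n, fint c I s x := by rw [← hstep]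
      _ = lam ^ (n+1) * ∫⁻ x in Jring (fsupp c I) 0, fint c I s x := by
          rw [ih, pow_succ, ← mul_assoc, mul_comm lam (lam ^ n), mul_assoc]

lemma fsupp_nonempty (hrow : ∀ i, ∃ j, c i j ≠ 0) {I : Finset (Fin d)} (hI : I.Nonempty) :
    (fsupp c I).Nonempty := by
  obtain ⟨i, hi⟩ := hI
  obtain ⟨j, hj⟩ := hrow i
  exact ⟨j, (mem_fsupp c).2 ⟨i, hi, hj⟩⟩

lemma Fand_eq_tsum (hc : ∀ i j, 0 ≤ c i j) (hrow : ∀ i, ∃ j, c i j ≠ 0)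
    {I : Finset (Fin d)} (hI : I.Nonempty) (s : ℝ) :
    Fand c I s = (∑' n : ℕ, (ENNReal.ofReal ((2:ℝ) ^ (s * I.card - (fsupp c I).card))) ^ n) *
      ∫⁻ x in Jring (fsupp c I) 0, fint c I s x := by
  have hJ : (fsupp c I).Nonempty := fsupp_nonempty c hrow hI
  unfold Fand
  rw [← iUnion_Jring _ hJ, lintegral_iUnion (fun n => measurableSet_Jring _ n) (Jring_disjoint _)]
  rw [tsum_congr (fun n => ring_closed c hc hrow I s n)]
  exact ENNReal.tsum_mul_right

end Aux4
section Aux5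
variable {d e : ℕ} (c : Fin d → Fin e → ℝ)

lemma Rj_def (j : Fin e) : True := trivial

lemma fint_ge_on_ubox (hc : ∀ i j, 0 ≤ c i j) (hrow : ∀ i, ∃ j, c i j ≠ 0)
    (I : Finset (Fin d)) {s : ℝ} (hs : 0 ≤ s) {x : Fin e → ℝ} (hx : x ∈ ubox e) :
    ENNReal.ofReal (CB c I ^ (-s)) ≤ fint c I s x := by
  unfold fint
  apply ENNReal.ofReal_le_ofReal
  exact Real.rpow_le_rpow_of_nonpos (prod_lform_pos c hc hrow hx I)
    (prod_lform_le_CB c hc hrow hx I) (neg_nonpos.2 hs)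

lemma ring0_pos (hc : ∀ i j, 0 ≤ c i j) (hrow : ∀ i, ∃ j, c i j ≠ 0)
    {I : Finset (Fin d)} (hI : I.Nonempty) {s : ℝ} (hs : 0 ≤ s) :
    0 < ∫⁻ x in Jring (fsupp c I) 0, fint c I s x := by
  classical
  set SC : Set (Fin e → ℝ) := {x | ∀ j, x j ∈ Set.Ioc (2⁻¹:ℝ) 1} with hSCdef
  have hSCub : SC ⊆ ubox e := by
    intro x hx j
    exact ⟨lt_trans (by norm_num) (hx j).1, (hx j).2⟩
  have hsub : SC ⊆ Jring (fsupp c I) 0 := by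
    intro x hx
    constructor
    · intro j
      refine ⟨(hSCub hx j).1, ?_⟩
      have := (hx j).2
      split_ifs <;> simpa using this
    · intro hmem
      obtain ⟨j₀, hj₀⟩ := fsupp_nonempty c hrow hI
      have h1 := (hmem j₀).2
      rw [if_pos hj₀] at h1
      have h2 := (hx j₀).1
      have : (2:ℝ)⁻¹ ^ (0 + 1) = 2⁻¹ := by norm_num
      rw [this] at h1
      linarith
  have hSCmeas : MeasurableSet SC := by
    have : SC = Set.pi Set.univ (fun _ : Fin e => Set.Ioc (2⁻¹:ℝ) 1) := by
      ext x; simp [hSCdef, Set.mem_pi]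
    rw [this]; exact MeasurableSet.univ_pi fun _ => measurableSet_Ioc
  have hvol : 0 < (volume : Measure (Fin e → ℝ)) SC := by
    have : SC = Set.pi Set.univ (fun _ : Fin e => Set.Ioc (2⁻¹:ℝ) 1) := by
      ext x; simp [hSCdef, Set.mem_pi]
    rw [this, volume_pi_pi]
    simp only [Real.volume_Ioc]
    rw [Finset.prod_const]
    rw [pos_iff_ne_zero]
    apply pow_ne_zero
    rw [← pos_iff_ne_zero, ENNReal.ofReal_pos]
    norm_num
  have hCBpos : (0:ℝ) < CB c I ^ (-s) := Real.rpow_pos_of_pos (CB_pos c hc I) _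
  calc (0:ENNReal) < ENNReal.ofReal (CB c I ^ (-s)) * volume SC := by
        refine ENNReal.mul_pos ?_ hvol.ne'
        have : (0:ENNReal) < ENNReal.ofReal (CB c I ^ (-s)) := ENNReal.ofReal_pos.2 hCBpos
        exact this.ne'
    _ = ∫⁻ _x in SC, ENNReal.ofReal (CB c I ^ (-s)) := by
        rw [setLIntegral_const]
    _ ≤ ∫⁻ x in SC, fint c I s x := by
        refine setLIntegral_mono (measurable_fint c I s) ?_
        intro x hx
        exact fint_ge_on_ubox c hc hrow I hs (hSCub hx)
    _ ≤ ∫⁻ x in Jring (fsupp c I) 0, fint c I s x := lintegral_mono_set hsub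

lemma exp_lt_of_Fand_lt_top (hc : ∀ i j, 0 ≤ c i j) (hrow : ∀ i, ∃ j, c i j ≠ 0)
    {I : Finset (Fin d)} (hI : I.Nonempty) {s : ℝ} (hs : 0 < s) (hF : Fand c I s < ⊤) :
    s * I.card < (fsupp c I).card := by
  by_contra hle
  push_neg at hle
  set lam := ENNReal.ofReal ((2:ℝ) ^ (s * I.card - (fsupp c I).card)) with hlam
  have hlam1 : (1:ENNReal) ≤ lam := by
    rw [hlam, ← ENNReal.ofReal_one]
    apply ENNReal.ofReal_le_ofReal
    rw [← Real.rpow_zero 2]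
    exact Real.rpow_le_rpow_of_exponent_le (by norm_num) (by linarith)
  have hdecomp := Fand_eq_tsum c hc hrow hI s
  have ha0 := ring0_pos c hc hrow hI hs.le
  have htsum : (∑' _n : ℕ, (1:ENNReal)) ≤ ∑' n : ℕ, lam ^ n := by
    apply ENNReal.tsum_le_tsum
    intro n
    calc (1:ENNReal) = 1 ^ n := (one_pow n).symm
      _ ≤ lam ^ n := pow_le_pow_left' hlam1 n
  have htop : (∑' n : ℕ, lam ^ n) = ⊤ :=
    top_le_iff.1 (le_trans (le_of_eq (ENNReal.tsum_const_eq_top_of_ne_zero one_ne_zero).symm) htsum)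
  rw [hdecomp, htop, ENNReal.top_mul ha0.ne'] at hF
  exact absurd hF (by simp)

/-- the forms of `I` vanishing at coordinate `j` -/
noncomputable def Isub (I : Finset (Fin d)) (j : Fin e) : Finset (Fin d) :=
  I.filter fun i => c i j = 0

end Aux5
section Aux6
variable {d e : ℕ} (c : Fin d → Fin e → ℝ)

lemma Fand_empty (s : ℝ) : Fand c (∅ : Finset (Fin d)) s = 1 := by
  have h1 : ∀ x : Fin e → ℝ, fint c (∅ : Finset (Fin d)) s x = 1 := by
    intro x
    unfold fint
    rw [Finset.prod_empty, Real.one_rpow, ENNReal.ofReal_one]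
  unfold Fand
  rw [setLIntegral_congr_fun measurableSet_ubox
    (fun x _ => h1 x), setLIntegral_one, volume_ubox]

lemma Fand_mono_exp (hc : ∀ i j, 0 ≤ c i j) (hrow : ∀ i, ∃ j, c i j ≠ 0)
    (I : Finset (Fin d)) {s s' : ℝ} (hss : s' ≤ s) :
    Fand c I s' ≤ ENNReal.ofReal (CB c I ^ (s - s')) * Fand c I s := by
  have hpt : ∀ x ∈ ubox e, fint c I s' x ≤ ENNReal.ofReal (CB c I ^ (s - s')) * fint c I s x := by
    intro x hx
    have hp := prod_lform_pos c hc hrow hx I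
    unfold fint
    rw [← ENNReal.ofReal_mul (Real.rpow_nonneg (CB_pos c hc I).le _)]
    apply ENNReal.ofReal_le_ofReal
    have heq : (∏ i ∈ I, lform c i x) ^ (-s')
        = (∏ i ∈ I, lform c i x) ^ (s - s') * (∏ i ∈ I, lform c i x) ^ (-s) := by
      rw [← Real.rpow_add hp]; congr 1; ring
    rw [heq]
    apply mul_le_mul_of_nonneg_right ?_ (Real.rpow_nonneg hp.le _)
    exact Real.rpow_le_rpow hp.le (prod_lform_le_CB c hc hrow hx I) (by linarith)
  calc Fand c I s' ≤ ∫⁻ x in ubox e, ENNReal.ofReal (CB c I ^ (s - s')) * fint c I s x :=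
        setLIntegral_mono ((measurable_fint c I s).const_mul _) hpt
    _ = ENNReal.ofReal (CB c I ^ (s - s')) * Fand c I s :=
        lintegral_const_mul _ (measurable_fint c I s)

lemma slab_lower (hc : ∀ i j, 0 ≤ c i j) (hrow : ∀ i, ∃ j, c i j ≠ 0)
    (I : Finset (Fin d)) (j : Fin e) {s : ℝ} (hs : 0 ≤ s) :
    Fand c (Isub c I j) s
      ≤ 2 * ENNReal.ofReal (CB c (I.filter fun i => c i j ≠ 0) ^ s) * Fand c I s := by
  classical
  set I₀ := Isub c I j with hI₀
  set I₁ := I.filter (fun i => c i j ≠ 0) with hI₁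
  set R : Set (Fin e → ℝ) := {x | ∀ l, x l ∈ Set.Ioc (if l = j then (2:ℝ)⁻¹ else 0) 1} with hR
  have hRmeas : MeasurableSet R := by
    have : R = Set.pi Set.univ (fun l => Set.Ioc (if l = j then (2:ℝ)⁻¹ else 0) 1) := by
      ext x; simp [hR, Set.mem_pi]
    rw [this]; exact MeasurableSet.univ_pi fun _ => measurableSet_Ioc
  have hRsub : R ⊆ ubox e := by
    intro x hx l
    refine ⟨lt_of_le_of_lt ?_ (hx l).1, (hx l).2⟩
    split_ifs <;> norm_num
  have hσ : ∀ l : Fin e, (0:ℝ) < (if l = j then (2:ℝ)⁻¹ else 1) := fun l => by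
    split_ifs <;> norm_num
  have h := setLIntegral_comp_affine e (fun l => if l = j then (2:ℝ)⁻¹ else 1)
    (fun l => if l = j then (2:ℝ)⁻¹ else 0) hσ (measurable_fint c I₀ s) hRmeas
  beta_reduce at h
  have hpre : (fun (x : Fin e → ℝ) l =>
      (if l = j then (2:ℝ)⁻¹ else 1) * x l + (if l = j then (2:ℝ)⁻¹ else 0)) ⁻¹' R
        = ubox e := by
    ext x
    simp only [Set.mem_preimage, hR, Set.mem_setOf_eq, ubox]
    refine forall_congr' fun l => ?_
    split_ifs with hl
    · simp only [Set.mem_Ioc]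
      constructor <;> rintro ⟨h1, h2⟩ <;> constructor <;> linarith
    · simp
  rw [hpre] at h
  have hσprod : (∏ l, (if l = j then (2:ℝ)⁻¹ else 1)) = 2⁻¹ := by
    rw [Finset.prod_ite_eq' Finset.univ j (fun _ => (2:ℝ)⁻¹)]
    simp
  have hinv : ∀ x : Fin e → ℝ, x ∈ ubox e →
      fint c I₀ s (fun l => (if l = j then (2:ℝ)⁻¹ else 1) * x l + (if l = j then (2:ℝ)⁻¹ else 0))
        = fint c I₀ s x := by
    intro x _
    unfold fint
    congr 1
    refine congrArg (· ^ (-s)) ?_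
    refine Finset.prod_congr rfl fun i hi => ?_
    have hcij : c i j = 0 := (Finset.mem_filter.1 hi).2
    unfold lform
    refine Finset.sum_congr rfl fun l _ => ?_
    by_cases hl : l = j
    · subst hl; simp [hcij]
    · simp [hl]
  rw [setLIntegral_congr_fun measurableSet_ubox hinv] at h
  rw [hσprod] at h
  have hF0 : (∫⁻ x in ubox e, fint c I₀ s x) = Fand c I₀ s := rfl
  rw [hF0] at h
  -- h : ∫⁻ x in R, fint c I₀ s x = ENNReal.ofReal 2⁻¹ * Fand c I₀ s
  have htwo : (2:ENNReal) * ENNReal.ofReal 2⁻¹ = 1 := by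
    rw [ENNReal.ofReal_inv_of_pos (by norm_num), ENNReal.ofReal_ofNat]
    exact ENNReal.mul_inv_cancel (by norm_num) (by norm_num)
  have hFeq : Fand c I₀ s = 2 * ∫⁻ x in R, fint c I₀ s x := by
    rw [h, ← mul_assoc, htwo, one_mul]
  have hpt : ∀ x ∈ R, fint c I₀ s x ≤ ENNReal.ofReal (CB c I₁ ^ s) * fint c I s x := by
    intro x hx
    have hxu := hRsub hx
    have hp0 : 0 < ∏ i ∈ I₀, lform c i x := prod_lform_pos c hc hrow hxu I₀
    have hp1 : 0 < ∏ i ∈ I₁, lform c i x := prod_lform_pos c hc hrow hxu I₁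
    have hsplit : (∏ i ∈ I, lform c i x)
        = (∏ i ∈ I₀, lform c i x) * (∏ i ∈ I₁, lform c i x) :=
      (Finset.prod_filter_mul_prod_filter_not I (fun i => c i j = 0) (fun i => lform c i x)).symm
    have hone : (∏ i ∈ I₁, lform c i x) ^ (-s) * (∏ i ∈ I₁, lform c i x) ^ s = 1 := by
      rw [← Real.rpow_add hp1]; norm_num
    calc fint c I₀ s x
        = ENNReal.ofReal ((∏ i ∈ I, lform c i x) ^ (-s) * (∏ i ∈ I₁, lform c i x) ^ s) := by
          unfold fint
          congr 1
          rw [hsplit, Real.mul_rpow hp0.le hp1.le, mul_assoc, hone, mul_one]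
      _ ≤ ENNReal.ofReal ((∏ i ∈ I, lform c i x) ^ (-s) * CB c I₁ ^ s) := by
          apply ENNReal.ofReal_le_ofReal
          apply mul_le_mul_of_nonneg_left ?_ (Real.rpow_nonneg (le_of_lt (prod_lform_pos c hc hrow hxu I)) _)
          exact Real.rpow_le_rpow hp1.le (prod_lform_le_CB c hc hrow hxu I₁) hs
      _ = ENNReal.ofReal (CB c I₁ ^ s) * fint c I s x := by
          rw [ENNReal.ofReal_mul (Real.rpow_nonneg (le_of_lt (prod_lform_pos c hc hrow hxu I)) _), mul_comm]
          rfl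
  calc Fand c I₀ s = 2 * ∫⁻ x in R, fint c I₀ s x := hFeq
    _ ≤ 2 * ∫⁻ x in R, ENNReal.ofReal (CB c I₁ ^ s) * fint c I s x :=
        mul_le_mul_right (setLIntegral_mono ((measurable_fint c I s).const_mul _) hpt) 2
    _ = 2 * (ENNReal.ofReal (CB c I₁ ^ s) * ∫⁻ x in R, fint c I s x) := by
        rw [lintegral_const_mul _ (measurable_fint c I s)]
    _ ≤ 2 * (ENNReal.ofReal (CB c I₁ ^ s) * Fand c I s) :=
        mul_le_mul_right (mul_le_mul_right (lintegral_mono_set hRsub) _) 2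
    _ = 2 * ENNReal.ofReal (CB c I₁ ^ s) * Fand c I s := by rw [mul_assoc]

end Aux6
section Aux7
variable {d e : ℕ} (c : Fin d → Fin e → ℝ)

lemma ring0_le (hc : ∀ i j, 0 ≤ c i j) (hrow : ∀ i, ∃ j, c i j ≠ 0)
    {I : Finset (Fin d)} (hI : I.Nonempty) {s : ℝ} (hs : 0 ≤ s) :
    (∫⁻ x in Jring (fsupp c I) 0, fint c I s x)
      ≤ ∑ j ∈ fsupp c I,
          ENNReal.ofReal ((∏ i ∈ I.filter (fun i => c i j ≠ 0), (c i j / 2)) ^ (-s)) *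
            Fand c (Isub c I j) s := by
  classical
  set J := fsupp c I with hJ
  set Slab : Fin e → Set (Fin e → ℝ) :=
    fun j => if j ∈ J then (ubox e ∩ {x | (2:ℝ)⁻¹ < x j}) else ∅ with hSlab
  have hcover : Jring J 0 ⊆ ⋃ j, Slab j := by
    intro x hx
    have hxu : x ∈ ubox e := Jring_subset_ubox J 0 hx
    have h2 := hx.2
    rw [Jbox, Set.mem_setOf_eq] at h2
    push_neg at h2
    obtain ⟨j, hj⟩ := h2
    have hj2 : ¬ (x j ≤ if j ∈ J then (2:ℝ)⁻¹ ^ (0 + 1) else 1) := fun hle => hj ⟨(hxu j).1, hle⟩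
    push_neg at hj2
    have hjJ : j ∈ J := by
      by_contra hjn
      rw [if_neg hjn] at hj2
      have := (hxu j).2
      linarith
    rw [if_pos hjJ] at hj2
    refine Set.mem_iUnion.2 ⟨j, ?_⟩
    rw [hSlab]
    simp only [if_pos hjJ]
    refine ⟨hxu, ?_⟩
    have : (2:ℝ)⁻¹ ^ (0 + 1) = 2⁻¹ := by norm_num
    rw [this] at hj2
    exact hj2
  have hslabint : ∀ j : Fin e, (∫⁻ x in Slab j, fint c I s x)
      = if j ∈ J then ∫⁻ x in ubox e ∩ {x | (2:ℝ)⁻¹ < x j}, fint c I s x else 0 := by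
    intro j
    rw [hSlab]
    split_ifs with hj
    · simp only [if_pos hj]
    · simp only [if_neg hj]
      rw [Measure.restrict_empty, lintegral_zero_measure]
  have hperj : ∀ j ∈ J, (∫⁻ x in ubox e ∩ {x | (2:ℝ)⁻¹ < x j}, fint c I s x)
      ≤ ENNReal.ofReal ((∏ i ∈ I.filter (fun i => c i j ≠ 0), (c i j / 2)) ^ (-s)) *
          Fand c (Isub c I j) s := by
    intro j hj
    set q := ∏ i ∈ I.filter (fun i => c i j ≠ 0), (c i j / 2) with hq
    have hqpos : 0 < q := by
      apply Finset.prod_pos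
      intro i hi
      have := (Finset.mem_filter.1 hi).2
      have := hc i j
      have : 0 < c i j := lt_of_le_of_ne (hc i j) (Ne.symm (Finset.mem_filter.1 hi).2)
      linarith
    have hpt : ∀ x ∈ ubox e ∩ {x | (2:ℝ)⁻¹ < x j},
        fint c I s x ≤ ENNReal.ofReal (q ^ (-s)) * fint c (Isub c I j) s x := by
      rintro x ⟨hxu, hxj⟩
      have hp0 : 0 < ∏ i ∈ Isub c I j, lform c i x := prod_lform_pos c hc hrow hxu _
      have hp1 : 0 < ∏ i ∈ I.filter (fun i => c i j ≠ 0), lform c i x :=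
        prod_lform_pos c hc hrow hxu _
      have hq_le : q ≤ ∏ i ∈ I.filter (fun i => c i j ≠ 0), lform c i x := by
        apply Finset.prod_le_prod
        · intro i hi
          have : 0 ≤ c i j := hc i j
          linarith
        · intro i hi
          have hxj' : (2:ℝ)⁻¹ ≤ x j := le_of_lt hxj
          have h1 : c i j / 2 ≤ c i j * x j := by
            have := hc i j
            nlinarith
          refine le_trans h1 ?_
          exact Finset.single_le_sum (fun k _ => mul_nonneg (hc i k) (hxu k).1.le)
            (Finset.mem_univ j)
      have hsplit : (∏ i ∈ I, lform c i x)
          = (∏ i ∈ Isub c I j, lform c i x) *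
            (∏ i ∈ I.filter (fun i => c i j ≠ 0), lform c i x) :=
        (Finset.prod_filter_mul_prod_filter_not I (fun i => c i j = 0) (fun i => lform c i x)).symm
      calc fint c I s x
          = ENNReal.ofReal ((∏ i ∈ Isub c I j, lform c i x) ^ (-s) *
              (∏ i ∈ I.filter (fun i => c i j ≠ 0), lform c i x) ^ (-s)) := by
            unfold fint
            rw [hsplit, Real.mul_rpow hp0.le hp1.le]
        _ ≤ ENNReal.ofReal ((∏ i ∈ Isub c I j, lform c i x) ^ (-s) * q ^ (-s)) := by
            apply ENNReal.ofReal_le_ofReal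
            exact mul_le_mul_of_nonneg_left
              (Real.rpow_le_rpow_of_nonpos hqpos hq_le (neg_nonpos.2 hs))
              (Real.rpow_nonneg hp0.le _)
        _ = ENNReal.ofReal (q ^ (-s)) * fint c (Isub c I j) s x := by
            rw [ENNReal.ofReal_mul (Real.rpow_nonneg hp0.le _), mul_comm]
            rfl
    calc (∫⁻ x in ubox e ∩ {x | (2:ℝ)⁻¹ < x j}, fint c I s x)
        ≤ ∫⁻ x in ubox e ∩ {x | (2:ℝ)⁻¹ < x j},
            ENNReal.ofReal (q ^ (-s)) * fint c (Isub c I j) s x :=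
          setLIntegral_mono ((measurable_fint c (Isub c I j) s).const_mul _) hpt
      _ = ENNReal.ofReal (q ^ (-s)) *
            ∫⁻ x in ubox e ∩ {x | (2:ℝ)⁻¹ < x j}, fint c (Isub c I j) s x :=
          lintegral_const_mul _ (measurable_fint c (Isub c I j) s)
      _ ≤ ENNReal.ofReal (q ^ (-s)) * Fand c (Isub c I j) s :=
          mul_le_mul_right (lintegral_mono_set Set.inter_subset_left) _
  calc (∫⁻ x in Jring J 0, fint c I s x)
      ≤ ∫⁻ x in ⋃ j, Slab j, fint c I s x := lintegral_mono_set hcover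
    _ ≤ ∑' j : Fin e, ∫⁻ x in Slab j, fint c I s x := lintegral_iUnion_le _ _
    _ = ∑ j : Fin e, ∫⁻ x in Slab j, fint c I s x := tsum_fintype _
    _ = ∑ j ∈ J, ∫⁻ x in ubox e ∩ {x | (2:ℝ)⁻¹ < x j}, fint c I s x := by
        rw [Finset.sum_congr rfl (fun j _ => hslabint j), Finset.sum_ite_mem, Finset.univ_inter]
    _ ≤ ∑ j ∈ J, ENNReal.ofReal ((∏ i ∈ I.filter (fun i => c i j ≠ 0), (c i j / 2)) ^ (-s)) *
          Fand c (Isub c I j) s := Finset.sum_le_sum hperj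

lemma Fand_backward (hc : ∀ i j, 0 ≤ c i j) (hrow : ∀ i, ∃ j, c i j ≠ 0)
    {I : Finset (Fin d)} (hI : I.Nonempty) {s : ℝ} (hs : 0 < s)
    (hk : s * I.card < (fsupp c I).card)
    (hfin : ∀ j ∈ fsupp c I, Fand c (Isub c I j) s < ⊤) :
    Fand c I s < ⊤ := by
  rw [Fand_eq_tsum c hc hrow hI s]
  have hlam1 : ENNReal.ofReal ((2:ℝ) ^ (s * I.card - (fsupp c I).card)) < 1 := by
    rw [ENNReal.ofReal_lt_one]
    exact Real.rpow_lt_one_of_one_lt_of_neg (by norm_num) (by linarith)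
  have h1 : (∑' n : ℕ, (ENNReal.ofReal ((2:ℝ) ^ (s * I.card - (fsupp c I).card))) ^ n) < ⊤ := by
    rw [ENNReal.tsum_geometric]
    exact ENNReal.inv_lt_top.2 (tsub_pos_of_lt hlam1)
  have h2 : (∫⁻ x in Jring (fsupp c I) 0, fint c I s x) < ⊤ := by
    refine lt_of_le_of_lt (ring0_le c hc hrow hI hs.le) ?_
    refine lt_of_le_of_lt (Finset.sum_le_sum (fun j hj => le_refl _)) ?_
    apply ENNReal.sum_lt_top.2
    intro j hj
    exact ENNReal.mul_lt_top ENNReal.ofReal_lt_top (hfin j hj)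
  exact ENNReal.mul_lt_top h1 h2

end Aux7
section Aux8
variable {d e : ℕ} (c : Fin d → Fin e → ℝ)

lemma Isub_ssubset (hrow : ∀ i, ∃ j, c i j ≠ 0) {I : Finset (Fin d)} {j : Fin e}
    (hj : j ∈ fsupp c I) : Isub c I j ⊂ I := by
  rw [Isub, Finset.filter_ssubset]
  obtain ⟨i, hi, hne⟩ := (mem_fsupp c).1 hj
  exact ⟨i, hi, hne⟩

lemma Fand_small (hc : ∀ i j, 0 ≤ c i j) (hrow : ∀ i, ∃ j, c i j ≠ 0) (I : Finset (Fin d)) :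
    ∀ s : ℝ, 0 < s → s * I.card < 1 → Fand c I s < ⊤ := by
  induction I using Finset.strongInduction with
  | _ I ih =>
    intro s hs h1
    rcases I.eq_empty_or_nonempty with rfl | hI
    · rw [Fand_empty]; exact ENNReal.one_lt_top
    · have hk : s * I.card < (fsupp c I).card := by
        have h2 : 1 ≤ ((fsupp c I).card : ℝ) := by
          exact_mod_cast (fsupp_nonempty c hrow hI).card_pos
        linarith
      refine Fand_backward c hc hrow hI hs hk ?_
      intro j hj
      have hss : Isub c I j ⊂ I := Isub_ssubset c hrow hj
      refine ih _ hss s hs ?_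
      have hcast : ((Isub c I j).card : ℝ) ≤ I.card := by
        exact_mod_cast Finset.card_le_card hss.subset
      nlinarith

lemma Fand_open (hc : ∀ i j, 0 ≤ c i j) (hrow : ∀ i, ∃ j, c i j ≠ 0) (I : Finset (Fin d)) :
    ∀ s : ℝ, 0 < s → Fand c I s < ⊤ → ∃ s', s < s' ∧ Fand c I s' < ⊤ := by
  induction I using Finset.strongInduction with
  | _ I ih =>
    intro s hs hF
    rcases I.eq_empty_or_nonempty with rfl | hI
    · exact ⟨s + 1, by linarith, by rw [Fand_empty]; exact ENNReal.one_lt_top⟩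
    · have hk := exp_lt_of_Fand_lt_top c hc hrow hI hs hF
      have hJne := fsupp_nonempty c hrow hI
      have hmpos : (0:ℝ) < I.card := by exact_mod_cast hI.card_pos
      have hsubfin : ∀ j, Fand c (Isub c I j) s < ⊤ := by
        intro j
        refine lt_of_le_of_lt (slab_lower c hc hrow I j hs.le) ?_
        exact ENNReal.mul_lt_top
          (ENNReal.mul_lt_top (by simp) ENNReal.ofReal_lt_top) hF
      have hchoice : ∀ j ∈ fsupp c I, ∃ s', s < s' ∧ Fand c (Isub c I j) s' < ⊤ := by
        intro j hj
        exact ih _ (Isub_ssubset c hrow hj) s hs (hsubfin j)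
      choose! sj hsj1 hsj2 using hchoice
      have hsk : s < ((fsupp c I).card : ℝ) / I.card := (lt_div_iff₀ hmpos).2 hk
      set T : ℝ := min ((fsupp c I).inf' hJne sj) ((s + (fsupp c I).card / I.card) / 2) with hT
      have hTgt : s < T := by
        apply lt_min
        · rw [Finset.lt_inf'_iff]
          intro j hj
          exact hsj1 j hj
        · linarith
      have hTk : T * I.card < (fsupp c I).card := by
        have h1 : T ≤ (s + ((fsupp c I).card : ℝ) / I.card) / 2 := min_le_right _ _
        have h2 : (s + ((fsupp c I).card : ℝ) / I.card) / 2 < ((fsupp c I).card : ℝ) / I.card := by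
          linarith
        exact (lt_div_iff₀ hmpos).1 (lt_of_le_of_lt h1 h2)
      refine ⟨T, hTgt, ?_⟩
      refine Fand_backward c hc hrow hI (lt_trans hs hTgt) hTk ?_
      intro j hj
      have hTle : T ≤ sj j := le_trans (min_le_left _ _) (Finset.inf'_le sj hj)
      refine lt_of_le_of_lt (Fand_mono_exp c hc hrow (Isub c I j) hTle) ?_
      exact ENNReal.mul_lt_top ENNReal.ofReal_lt_top (hsj2 j hj)

end Aux8

/-- At the integrability index `ŝ(P)` itself, the integral `∫_{(0,1]^e} P^{-ŝ(P)}` diverges. -/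
theorem stmt_6 (d e : ℕ) (he : 0 < e) (c : Fin d → Fin e → ℝ)
    (hc : ∀ i j, 0 ≤ c i j) (hrow : ∀ i, ∃ j, c i j ≠ 0)
    (sHat : ℝ)
    (hsHat : sHat = sSup {t : ℝ | 0 < t ∧
        (∫⁻ x in {x : Fin e → ℝ | ∀ j, x j ∈ Set.Ioc (0:ℝ) 1},
          ENNReal.ofReal ((∏ i, ∑ j, c i j * x j) ^ (-t)) ∂volume) < ⊤})
    (hbdd : BddAbove {t : ℝ | 0 < t ∧
        (∫⁻ x in {x : Fin e → ℝ | ∀ j, x j ∈ Set.Ioc (0:ℝ) 1},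
          ENNReal.ofReal ((∏ i, ∑ j, c i j * x j) ^ (-t)) ∂volume) < ⊤}) :
    (∫⁻ x in {x : Fin e → ℝ | ∀ j, x j ∈ Set.Ioc (0:ℝ) 1},
      ENNReal.ofReal ((∏ i, ∑ j, c i j * x j) ^ (-sHat)) ∂volume) = ⊤ := by
  classical
  have hFand : ∀ t : ℝ,
      (∫⁻ x in {x : Fin e → ℝ | ∀ j, x j ∈ Set.Ioc (0:ℝ) 1},
        ENNReal.ofReal ((∏ i, ∑ j, c i j * x j) ^ (-t)) ∂volume) = Fand c Finset.univ t :=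
    fun t => rfl
  have ht0 : (1:ℝ) / (d + 1) ∈ {t : ℝ | 0 < t ∧
      (∫⁻ x in {x : Fin e → ℝ | ∀ j, x j ∈ Set.Ioc (0:ℝ) 1},
        ENNReal.ofReal ((∏ i, ∑ j, c i j * x j) ^ (-t)) ∂volume) < ⊤} := by
    constructor
    · positivity
    · rw [hFand]
      apply Fand_small c hc hrow
      · positivity
      · rw [Finset.card_univ, Fintype.card_fin]
        rw [div_mul_eq_mul_div, div_lt_one (by positivity)]
        push_cast
        linarith
  have hpos : 0 < sHat := by
    have h1 := le_csSup hbdd ht0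
    rw [← hsHat] at h1
    have : (0:ℝ) < 1 / (d + 1) := by positivity
    linarith
  by_contra hne
  have hF : Fand c Finset.univ sHat < ⊤ := by
    rw [← hFand]
    exact lt_top_iff_ne_top.2 hne
  obtain ⟨s', hs'1, hs'2⟩ := Fand_open c hc hrow Finset.univ sHat hpos hF
  have hmem : s' ∈ {t : ℝ | 0 < t ∧
      (∫⁻ x in {x : Fin e → ℝ | ∀ j, x j ∈ Set.Ioc (0:ℝ) 1},
        ENNReal.ofReal ((∏ i, ∑ j, c i j * x j) ^ (-t)) ∂volume) < ⊤} :=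
    ⟨lt_trans hpos hs'1, by rw [hFand]; exact hs'2⟩
  have hle := le_csSup hbdd hmem
  rw [← hsHat] at hle
  linarith
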